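/- The dihedral Artin group A = ⟨a, b | (ab)² = (ba)²⟩ admits a homomorphism χ : A → ℤ with χ(a) = 1, χ(b) = −1, and its kernel A^χ has a presentation ⟨w_n (n ∈ ℤ) | w_n² = w_0² for all n⟩ where w_n = a^{n+1} b a^{−n}. Consequently, the abelianization of A^χ is isomorphic to the quotient of the free abelian group on generators {w_n : n ∈ ℤ} by the relations 2w_n = 2w_0. -/

import Mathlib

namespace Stmt13

open PresentedGroup SemidirectProduct

abbrev relsA : Set (FreeGroup (Fin 2)) :=
  {(FreeGroup.of (0 : Fin 2) * FreeGroup.of 1) ^ 2 * ((FreeGroup.of 1 * FreeGroup.of 0) ^ 2)⁻¹}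

abbrev A := PresentedGroup relsA

abbrev relsP : Set (FreeGroup ℤ) :=
  {x | ∃ n : ℤ, x = FreeGroup.of n ^ 2 * (FreeGroup.of 0 ^ 2)⁻¹}

abbrev P := PresentedGroup relsP

noncomputable section

abbrev a : A := PresentedGroup.of 0
abbrev b : A := PresentedGroup.of 1

lemma relA : (a * b) ^ 2 = (b * a) ^ 2 := by
  have h : (PresentedGroup.mk relsA
      ((FreeGroup.of (0 : Fin 2) * FreeGroup.of 1) ^ 2 *
        ((FreeGroup.of 1 * FreeGroup.of 0) ^ 2)⁻¹)) = 1 := by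
    apply (QuotientGroup.eq_one_iff _).2
    exact Subgroup.subset_normalClosure rfl
  simpa [mul_inv_eq_one, PresentedGroup.of] using h

lemma relP (n : ℤ) : (PresentedGroup.of n : P) ^ 2 = (PresentedGroup.of 0 : P) ^ 2 := by
  have h : (PresentedGroup.mk relsP (FreeGroup.of n ^ 2 * (FreeGroup.of 0 ^ 2)⁻¹)) = 1 := by
    apply (QuotientGroup.eq_one_iff _).2
    exact Subgroup.subset_normalClosure ⟨n, rfl⟩
  simpa [mul_inv_eq_one, PresentedGroup.of] using h

def S : P →* P :=
  PresentedGroup.toGroup (f := fun n => PresentedGroup.of (n + 1)) (by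
    rintro r ⟨n, rfl⟩
    rw [map_mul, map_pow, map_inv, map_pow, FreeGroup.lift_apply_of, FreeGroup.lift_apply_of,
      mul_inv_eq_one, relP (n + 1), relP (0 + 1)])

def S' : P →* P :=
  PresentedGroup.toGroup (f := fun n => PresentedGroup.of (n - 1)) (by
    rintro r ⟨n, rfl⟩
    rw [map_mul, map_pow, map_inv, map_pow, FreeGroup.lift_apply_of, FreeGroup.lift_apply_of,
      mul_inv_eq_one, relP (n - 1), relP (0 - 1)])

def shiftE : P ≃* P :=
  MonoidHom.toMulEquiv S S'
    (by ext n; simp [S, S'])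
    (by ext n; simp [S, S'])

lemma shiftE_of (n : ℤ) : shiftE (PresentedGroup.of n) = PresentedGroup.of (n + 1) := by
  simp [shiftE, S]

lemma shiftE_symm_of (n : ℤ) : shiftE.symm (PresentedGroup.of n) = PresentedGroup.of (n - 1) := by
  simp [shiftE, S']

lemma shiftpow (k n : ℤ) :
    ((shiftE ^ k : MulAut P)) (PresentedGroup.of n) = PresentedGroup.of (n + k) := by
  induction k using Int.induction_on generalizing n with
  | zero => simp
  | succ k ih =>
      have : (shiftE ^ ((k : ℤ) + 1) : MulAut P) = (shiftE ^ (k : ℤ)) * shiftE := by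
        rw [zpow_add_one]
      rw [this]
      show (shiftE ^ (k : ℤ) : MulAut P) (shiftE (PresentedGroup.of n)) = _
      rw [shiftE_of, ih]
      ring_nf
  | pred k ih =>
      have : (shiftE ^ (-(k : ℤ) - 1) : MulAut P) = (shiftE ^ (-(k : ℤ))) * shiftE⁻¹ := by
        rw [zpow_sub_one]
      rw [this]
      show (shiftE ^ (-(k : ℤ)) : MulAut P) (shiftE⁻¹ (PresentedGroup.of n)) = _
      have hinv : (shiftE⁻¹ : MulAut P) (PresentedGroup.of n) = PresentedGroup.of (n - 1) :=
        shiftE_symm_of n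
      rw [hinv, ih]
      ring_nf

def φaut : Multiplicative ℤ →* MulAut P := zpowersHom _ shiftE

abbrev Qsd := SemidirectProduct P (Multiplicative ℤ) φaut

def Φ : A →* Qsd :=
  PresentedGroup.toGroup
    (f := fun i => ![inr (Multiplicative.ofAdd 1),
      inl (PresentedGroup.of (-1)) * inr (Multiplicative.ofAdd (-1))] i) (by
    rintro r rfl
    rw [map_mul, map_pow, map_inv, map_pow, map_mul, map_mul, FreeGroup.lift_apply_of,
      FreeGroup.lift_apply_of]
    simp only [Matrix.cons_val_zero, Matrix.cons_val_one, Matrix.head_cons]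
    have h01 : inr (φ := φaut) (Multiplicative.ofAdd 1) *
        (inl (PresentedGroup.of (-1)) * inr (Multiplicative.ofAdd (-1))) =
        inl (PresentedGroup.of 0) := by
      ext
      · simp only [SemidirectProduct.mul_left, left_inr, right_inr, left_inl, right_inl]
        simp [mul_left, φaut, shiftpow, shiftE_of]
      · simp [mul_right]
    have h10 : (inl (PresentedGroup.of (-1)) * inr (Multiplicative.ofAdd (-1))) *
        inr (φ := φaut) (Multiplicative.ofAdd 1) =
        inl (PresentedGroup.of (-1)) := by
      ext
      · simp only [SemidirectProduct.mul_left, left_inr, right_inr, left_inl, right_inl]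
        simp [mul_left, φaut, shiftpow]
      · simp [mul_right]
    rw [h01, h10, ← map_pow, ← map_pow, relP (-1), ← map_inv, ← map_mul, mul_inv_cancel,
      map_one])

def χ : A →* Multiplicative ℤ := rightHom.comp Φ

lemma χa : χ a = Multiplicative.ofAdd 1 := by
  simp [χ, Φ, PresentedGroup.toGroup.of]

lemma χb : χ b = Multiplicative.ofAdd (-1) := by
  simp [χ, Φ, PresentedGroup.toGroup.of]

lemma za : (a * b) ^ 2 * a = a * (a * b) ^ 2 := by
  conv_rhs => rw [relA]
  simp [sq, mul_assoc]

lemma zcomm (n : ℤ) : (a * b) ^ 2 * a ^ n = a ^ n * (a * b) ^ 2 :=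
  (Commute.zpow_right za n : _)

lemma key (n : ℤ) : (a ^ (n + 1) * b * a ^ (-n)) ^ 2 = (a * b) ^ 2 := by
  have h1 : (a ^ (n + 1) * b * a ^ (-n)) ^ 2 = a ^ n * ((a * b) ^ 2 * a ^ (-n)) := by
    simp [sq, mul_assoc, zpow_add, zpow_neg]
  rw [h1, ← mul_assoc, ← zcomm n, mul_assoc, ← zpow_add]
  simp

def φmap : P →* A :=
  PresentedGroup.toGroup (f := fun n => a ^ (n + 1) * b * a ^ (-n)) (by
    rintro r ⟨n, rfl⟩
    rw [map_mul, map_pow, map_inv, map_pow, FreeGroup.lift_apply_of, FreeGroup.lift_apply_of,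
      mul_inv_eq_one, key n, key 0])

lemma φmap_of (n : ℤ) : φmap (PresentedGroup.of n) = a ^ (n + 1) * b * a ^ (-n) := by
  simp [φmap]

lemma hcond : ∀ g : Multiplicative ℤ,
    φmap.comp ((φaut g).toMonoidHom) =
      (MulAut.conj ((zpowersHom A a) g)).toMonoidHom.comp φmap := by
  intro g
  refine PresentedGroup.ext fun n => ?_
  simp only [MonoidHom.comp_apply, MulEquiv.coe_toMonoidHom, MulAut.conj_apply,
    zpowersHom_apply]
  rw [show ((φaut g) (PresentedGroup.of n)) = PresentedGroup.of (n + g.toAdd) from by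
    simpa [φaut] using shiftpow g.toAdd n, φmap_of, φmap_of,
    show n + g.toAdd = g.toAdd + n from add_comm _ _]
  simp [mul_assoc, zpow_add, zpow_neg, mul_inv_rev]

def Ψ : Qsd →* A := SemidirectProduct.lift φmap (zpowersHom A a) hcond

lemma Φa : Φ a = inr (Multiplicative.ofAdd 1) := by simp [Φ]

lemma Φb : Φ b = inl (PresentedGroup.of (-1)) * inr (Multiplicative.ofAdd (-1)) := by
  simp [Φ]

lemma ΨΦ : Ψ.comp Φ = MonoidHom.id A := by
  refine PresentedGroup.ext fun i => ?_
  fin_cases i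
  · show Ψ (Φ a) = a
    rw [Φa]
    simp [Ψ]
  · show Ψ (Φ b) = b
    rw [Φb, map_mul]
    simp only [Ψ, SemidirectProduct.lift_inl, SemidirectProduct.lift_inr, φmap_of,
      zpowersHom_apply, toAdd_ofAdd]
    norm_num [mul_assoc, zpow_add, zpow_neg]

lemma ofAdd_zpow (k : ℤ) : Multiplicative.ofAdd 1 ^ k = Multiplicative.ofAdd k := by
  rw [← ofAdd_zsmul]
  norm_num

lemma Φa_zpow (k : ℤ) : Φ (a ^ k) = inr (Multiplicative.ofAdd k) := by
  rw [map_zpow, Φa, ← map_zpow, ofAdd_zpow]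

lemma ΦφP : Φ.comp φmap = SemidirectProduct.inl := by
  refine PresentedGroup.ext fun n => ?_
  show Φ (φmap (PresentedGroup.of n)) = inl (PresentedGroup.of n)
  rw [φmap_of, map_mul, map_mul, Φa_zpow, Φa_zpow, Φb]
  ext
  · simp only [SemidirectProduct.mul_left, left_inr, right_inr, left_inl, right_inl]
    simp [mul_left, mul_right, φaut, shiftpow]
  · simp [mul_left, mul_right]

lemma χφmap : χ.comp φmap = 1 := by
  rw [χ, MonoidHom.comp_assoc, ΦφP, rightHom_comp_inl]

lemma Φright (g : A) (hg : g ∈ χ.ker) : (Φ g).right = 1 := hg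

lemma Φker (g : A) (hg : g ∈ χ.ker) : Φ g = inl ((Φ g).left) := by
  ext
  · simp
  · simp [Φright g hg]

def eIso : P ≃* χ.ker where
  toFun p := ⟨φmap p, show χ (φmap p) = 1 from by
    have := DFunLike.congr_fun χφmap p
    simpa using this⟩
  invFun g := (Φ (g : A)).left
  left_inv p := by
    show (Φ (φmap p)).left = p
    have := DFunLike.congr_fun ΦφP p
    simp only [MonoidHom.comp_apply] at this
    rw [this]
    simp
  right_inv g := by
    apply Subtype.ext
    show φmap ((Φ (g : A)).left) = (g : A)
    have h1 : Ψ (Φ (g : A)) = (g : A) := DFunLike.congr_fun ΨΦ (g : A)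
    rw [Φker (g : A) g.2] at h1
    simpa only [Ψ, SemidirectProduct.lift_inl] using h1
  map_mul' p q := by
    apply Subtype.ext
    show φmap (p * q) = φmap p * φmap q
    exact map_mul _ _ _

lemma eIso_of (n : ℤ) :
    ((eIso (PresentedGroup.of n) : χ.ker) : A) =
      (PresentedGroup.of 0 : A) ^ (n + 1) * PresentedGroup.of 1 *
        (PresentedGroup.of 0 : A) ^ (-n) := by
  show φmap (PresentedGroup.of n) = _
  rw [φmap_of]

abbrev relAb : Set (FreeAbelianGroup ℤ) :=
  {x | ∃ n : ℤ, x = 2 • FreeAbelianGroup.of n - 2 • FreeAbelianGroup.of 0}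

abbrev Qab := FreeAbelianGroup ℤ ⧸ AddSubgroup.closure relAb

lemma relQab (n : ℤ) :
    (2 : ℕ) • ((QuotientAddGroup.mk (FreeAbelianGroup.of n) : Qab)) =
      (2 : ℕ) • ((QuotientAddGroup.mk (FreeAbelianGroup.of 0) : Qab)) := by
  have h0 : ((QuotientAddGroup.mk
      (2 • FreeAbelianGroup.of n - 2 • FreeAbelianGroup.of 0) : Qab)) = 0 :=
    (QuotientAddGroup.eq_zero_iff _).2 (AddSubgroup.subset_closure ⟨n, rfl⟩)
  have h1 : ((QuotientAddGroup.mk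
      (2 • FreeAbelianGroup.of n - 2 • FreeAbelianGroup.of 0) : Qab)) =
      (2 : ℕ) • (QuotientAddGroup.mk (FreeAbelianGroup.of n) : Qab) -
        (2 : ℕ) • (QuotientAddGroup.mk (FreeAbelianGroup.of 0) : Qab) := by
    rw [QuotientAddGroup.mk_sub, QuotientAddGroup.mk_nsmul, QuotientAddGroup.mk_nsmul]
  rw [← sub_eq_zero, ← h1, h0]

def Fhom : Abelianization P →* Multiplicative Qab :=
  Abelianization.lift (PresentedGroup.toGroup
    (f := fun n => Multiplicative.ofAdd
      ((QuotientAddGroup.mk (FreeAbelianGroup.of n) : Qab))) (by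
      rintro r ⟨n, rfl⟩
      rw [map_mul, map_pow, map_inv, map_pow, FreeGroup.lift_apply_of, FreeGroup.lift_apply_of,
        mul_inv_eq_one, ← ofAdd_nsmul, ← ofAdd_nsmul, relQab n]))

def f1 : FreeAbelianGroup ℤ →+ Additive (Abelianization P) :=
  FreeAbelianGroup.lift (fun n => Additive.ofMul (Abelianization.of (PresentedGroup.of n)))

lemma hker : AddSubgroup.closure relAb ≤ f1.ker := by
  rw [AddSubgroup.closure_le]
  rintro x ⟨n, rfl⟩
  simp only [SetLike.mem_coe, AddMonoidHom.mem_ker, map_sub, map_nsmul, f1,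
    FreeAbelianGroup.lift_apply_of]
  rw [sub_eq_zero, ← ofMul_pow, ← ofMul_pow, ← map_pow, ← map_pow, relP n]

def Bhom : Multiplicative Qab →* Abelianization P :=
  AddMonoidHom.toMultiplicativeLeft
    (QuotientAddGroup.lift _ f1 (fun x hx => hker hx))

lemma BF : Bhom.comp Fhom = MonoidHom.id _ := by
  apply Abelianization.hom_ext
  refine PresentedGroup.ext fun n => ?_
  simp [Fhom, Bhom, f1, Abelianization.lift_apply_of, PresentedGroup.toGroup.of,
    AddMonoidHom.coe_toMultiplicativeLeft, QuotientAddGroup.lift_mk,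
    FreeAbelianGroup.lift_apply_of]

lemma FB : Fhom.comp Bhom = MonoidHom.id _ := by
  refine MonoidHom.ext fun x => ?_
  have key : ∀ y : FreeAbelianGroup ℤ,
      Fhom (Bhom (Multiplicative.ofAdd ((QuotientAddGroup.mk y : Qab)))) =
        Multiplicative.ofAdd ((QuotientAddGroup.mk y : Qab)) := by
    intro y
    induction y using FreeAbelianGroup.induction_on with
    | zero => simp
    | of m =>
        simp [Fhom, Bhom, f1, Abelianization.lift_apply_of, PresentedGroup.toGroup.of,
          AddMonoidHom.coe_toMultiplicativeLeft, QuotientAddGroup.lift_mk,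
          FreeAbelianGroup.lift_apply_of]
    | neg m ih =>
        rw [QuotientAddGroup.mk_neg, ofAdd_neg, map_inv, map_inv, ih]
    | add y z ih1 ih2 =>
        rw [QuotientAddGroup.mk_add, ofAdd_add, map_mul, map_mul, ih1, ih2]
  obtain ⟨y, hy⟩ := QuotientAddGroup.mk_surjective (Multiplicative.toAdd x)
  have hx : x = Multiplicative.ofAdd ((QuotientAddGroup.mk y : Qab)) := by
    rw [hy]; rfl
  rw [MonoidHom.comp_apply, hx, key y, MonoidHom.id_apply]

noncomputable def equivAb : Abelianization χ.ker ≃* Multiplicative Qab :=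
  (eIso.abelianizationCongr.symm).trans (MonoidHom.toMulEquiv Fhom Bhom BF FB)

end

end Stmt13

/-- The dihedral Artin group `A = ⟨a, b ∣ (ab)² = (ba)²⟩` admits a homomorphism `χ : A → ℤ`
with `χ(a) = 1`, `χ(b) = −1`; its kernel is isomorphic to the group presented as
`⟨w_n (n ∈ ℤ) ∣ w_n² = w_0²⟩` via `w_n ↦ a^{n+1} b a^{−n}`; and consequently the
abelianization of `ker χ` is the quotient of the free abelian group on `{w_n : n ∈ ℤ}` by
the relations `2w_n = 2w_0`. -/
theorem stmt_13 :
    ∃ χ : PresentedGroup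
        ({(FreeGroup.of (0 : Fin 2) * FreeGroup.of 1) ^ 2 *
          ((FreeGroup.of 1 * FreeGroup.of 0) ^ 2)⁻¹} : Set (FreeGroup (Fin 2))) →*
        Multiplicative ℤ,
      χ (PresentedGroup.of 0) = Multiplicative.ofAdd 1 ∧
      χ (PresentedGroup.of 1) = Multiplicative.ofAdd (-1) ∧
      (∃ e : PresentedGroup
            ({x | ∃ n : ℤ, x = FreeGroup.of n ^ 2 * (FreeGroup.of 0 ^ 2)⁻¹} :
              Set (FreeGroup ℤ)) ≃* χ.ker,
        ∀ n : ℤ,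
          ((e (PresentedGroup.of n) : χ.ker) :
              PresentedGroup
                ({(FreeGroup.of (0 : Fin 2) * FreeGroup.of 1) ^ 2 *
                  ((FreeGroup.of 1 * FreeGroup.of 0) ^ 2)⁻¹} : Set (FreeGroup (Fin 2)))) =
            (PresentedGroup.of 0) ^ (n + 1) * PresentedGroup.of 1 *
              (PresentedGroup.of 0) ^ (-n)) ∧
      Nonempty
        (Abelianization χ.ker ≃*
          Multiplicative
            (FreeAbelianGroup ℤ ⧸
              AddSubgroup.closure
                {x | ∃ n : ℤ,
                  x = 2 • FreeAbelianGroup.of n - 2 • FreeAbelianGroup.of 0})) := by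
  exact ⟨Stmt13.χ, Stmt13.χa, Stmt13.χb, ⟨Stmt13.eIso, Stmt13.eIso_of⟩, ⟨Stmt13.equivAb⟩⟩
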